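/- arXiv:0806.1022 — 2 statements merged into one kernel-verified Lean document; each statement's English description precedes it below -/
import Mathlib

section
/- Let p : 𝔅 → G be an upper semicontinuous Banach bundle over a second countable locally compact Hausdorff space G and let ν be a generalized Radon measure on 𝔅 with total variation |ν|. Then: (1) for every f ∈ Γ_c(G;𝔅), |ν(f)| ≤ ∫_G ‖f(x)‖ d|ν|(x); and (2) if μ is any Radon measure on G such that |ν(f)| ≤ ∫_G ‖f(x)‖ dμ(x) for all f ∈ Γ_c(G;𝔅), then ∫_G φ d|ν| ≤ ∫_G φ dμ for every nonnegative φ ∈ C_c(G). -/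
open MeasureTheory Filter Topology Set

/-- An upper semicontinuous Banach bundle over a topological space `X`, with fibres
`Fib x` (each a complex Banach space), total space `(x : X) × Fib x` and bundle
projection `Sigma.fst`.  The axioms are (B1)–(B4) of the paper, together with the
standing assumption that the bundle has enough sections. -/
structure USCBanachBundle (X : Type) [TopologicalSpace X] (Fib : X → Type)
    [∀ x, NormedAddCommGroup (Fib x)] [∀ x, NormedSpace ℂ (Fib x)]
    [∀ x, CompleteSpace (Fib x)] : Type where
  /-- the topology on the total space `Σ x, Fib x` -/
  topTotal : TopologicalSpace ((x : X) × Fib x)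
  /-- the projection is continuous -/
  continuous_proj : @Continuous ((x : X) × Fib x) X topTotal inferInstance
    fun b => b.1
  /-- the projection is an open map -/
  isOpenMap_proj : @IsOpenMap ((x : X) × Fib x) X topTotal inferInstance
    fun b => b.1
  /-- (B1): the norm is upper semicontinuous on the total space -/
  isOpen_norm_lt : ∀ r : ℝ, @IsOpen ((x : X) × Fib x) topTotal { b | ‖b.2‖ < r }
  /-- (B2): addition is continuous on pairs lying in a common fibre -/
  continuous_add :
    @Continuous { q : ((x : X) × Fib x) × ((x : X) × Fib x) // q.1.1 = q.2.1 }
      ((x : X) × Fib x)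
      (@instTopologicalSpaceSubtype _ _
        (@instTopologicalSpaceProd _ _ topTotal topTotal))
      topTotal
      (fun q => ⟨q.1.1.1, q.1.1.2 + cast (congrArg Fib q.2.symm) q.1.2.2⟩)
  /-- (B3): scalar multiplication is continuous -/
  continuous_smul : ∀ c : ℂ,
    @Continuous ((x : X) × Fib x) ((x : X) × Fib x) topTotal topTotal
      fun b => ⟨b.1, c • b.2⟩
  /-- (B4): if `p (a i) → x` and `‖a i‖ → 0` then `a i → 0ₓ` (stated for filters,
  which is equivalent to the statement for nets) -/
  tendsto_zero : ∀ {ι : Type} (l : Filter ι) (a : ι → (x : X) × Fib x) (x : X),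
    Filter.Tendsto (fun i => (a i).1) l (nhds x) →
    Filter.Tendsto (fun i => ‖(a i).2‖) l (nhds (0 : ℝ)) →
    Filter.Tendsto a l (@nhds _ topTotal (⟨x, 0⟩ : (x : X) × Fib x))
  /-- the bundle has enough sections -/
  enough_sections : ∀ (x : X) (v : Fib x), ∃ f : ∀ y, Fib y,
    (@Continuous X ((x : X) × Fib x) inferInstance topTotal fun y => ⟨y, f y⟩) ∧
      f x = v

namespace USCBanachBundle

variable {X : Type} [TopologicalSpace X] {Fib : X → Type}
  [∀ x, NormedAddCommGroup (Fib x)] [∀ x, NormedSpace ℂ (Fib x)]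
  [∀ x, CompleteSpace (Fib x)]

/-- `f` is a continuous (global) section of the bundle `B`. -/
def IsContSection (B : USCBanachBundle X Fib) (f : ∀ x, Fib x) : Prop :=
  @Continuous X ((x : X) × Fib x) inferInstance B.topTotal fun x => ⟨x, f x⟩

/-- membership in `Γ_c(X;𝔅)`: continuous compactly supported sections. -/
def MemGammaC (B : USCBanachBundle X Fib) (f : ∀ x, Fib x) : Prop :=
  B.IsContSection f ∧ ∃ K : Set X, IsCompact K ∧ ∀ x ∉ K, f x = 0

/-- membership in `Γ₀(X;𝔅)`: continuous sections vanishing at infinity. -/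
def MemGammaZero (B : USCBanachBundle X Fib) (f : ∀ x, Fib x) : Prop :=
  B.IsContSection f ∧ ∀ ε : ℝ, 0 < ε → IsCompact { x | ε ≤ ‖f x‖ }

/-- The Banach space `Γ₀(X;𝔅)` is separable: there is a countable set of sections in
`Γ₀` which is dense for the supremum norm. -/
def SeparableGammaZero (B : USCBanachBundle X Fib) : Prop :=
  ∃ D : Set (∀ x, Fib x), D.Countable ∧ (∀ g ∈ D, B.MemGammaZero g) ∧
    ∀ f, B.MemGammaZero f → ∀ ε : ℝ, 0 < ε → ∃ g ∈ D, ∀ x, ‖f x - g x‖ < ε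

/-- uniform convergence of a sequence of sections to a section. -/
def UnifTendsto (B : USCBanachBundle X Fib) (F : ℕ → ∀ x, Fib x)
    (f : ∀ x, Fib x) : Prop :=
  ∀ ε : ℝ, 0 < ε → ∃ N : ℕ, ∀ n ≥ N, ∀ x, ‖F n x - f x‖ < ε

/-- continuity of `ν` in the inductive limit topology: `ν fₙ → ν f` whenever `fₙ → f`
uniformly with all supports contained in a fixed compact set. -/
def ILTContinuous (B : USCBanachBundle X Fib) (ν : (∀ x, Fib x) → ℂ) : Prop :=
  ∀ (F : ℕ → ∀ x, Fib x) (f : ∀ x, Fib x) (K : Set X),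
    (∀ n, B.MemGammaC (F n)) → B.MemGammaC f → IsCompact K →
    (∀ n, ∀ x ∉ K, F n x = 0) → B.UnifTendsto F f →
    Filter.Tendsto (fun n => ν (F n)) Filter.atTop (nhds (ν f))

/-- a generalized Radon measure on the bundle `B`: a linear functional on
`Γ_c(X;𝔅)` which is continuous in the inductive limit topology. -/
def IsGRM (B : USCBanachBundle X Fib) (ν : (∀ x, Fib x) → ℂ) : Prop :=
  (∀ f g, B.MemGammaC f → B.MemGammaC g →
    ν (fun x => f x + g x) = ν f + ν g) ∧
  (∀ (c : ℂ) (f), B.MemGammaC f → ν (fun x => c • f x) = c * ν f) ∧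
  B.ILTContinuous ν

/-- `μ` is the total variation `|ν|` of the generalized Radon measure `ν`: a Radon
measure (Borel measure, finite on compacts) such that for every nonnegative
`φ ∈ C_c(X)`, `∫ φ dμ = sup { |ν f| : f ∈ Γ_c(X;𝔅), ‖f x‖ ≤ φ x for all x }`. -/
def IsTotalVariation [MeasurableSpace X] (B : USCBanachBundle X Fib)
    (ν : (∀ x, Fib x) → ℂ) (μ : Measure X) : Prop :=
  (∀ K : Set X, IsCompact K → μ K < ⊤) ∧
  ∀ φ : X → ℝ, Continuous φ → HasCompactSupport φ → (∀ x, 0 ≤ φ x) →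
    ∫ x, φ x ∂μ =
      sSup { r : ℝ | ∃ f, B.MemGammaC f ∧ (∀ x, ‖f x‖ ≤ φ x) ∧ r = ‖ν f‖ }

/-- membership in `Σ_c(X;𝔅)`: bounded sections which are pointwise limits (in the
topology of the total space) of a uniformly bounded sequence in `Γ_c(X;𝔅)` whose
supports are contained in a fixed compact set. -/
def MemSigmaC (B : USCBanachBundle X Fib) (f : ∀ x, Fib x) : Prop :=
  (∃ M : ℝ, ∀ x, ‖f x‖ ≤ M) ∧
  ∃ (F : ℕ → ∀ x, Fib x) (K : Set X) (M : ℝ),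
    (∀ n, B.MemGammaC (F n)) ∧ (∀ n x, ‖F n x‖ ≤ M) ∧ IsCompact K ∧
    (∀ n, ∀ x ∉ K, F n x = 0) ∧
    ∀ x, Filter.Tendsto (fun n => (⟨x, F n x⟩ : (x : X) × Fib x)) Filter.atTop
      (@nhds _ B.topTotal (⟨x, f x⟩ : (x : X) × Fib x))

end USCBanachBundle

namespace USCBanachBundle

section Aux

variable {X : Type} [TopologicalSpace X] {Fib : X → Type}
  [∀ x, NormedAddCommGroup (Fib x)] [∀ x, NormedSpace ℂ (Fib x)]
  [∀ x, CompleteSpace (Fib x)]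

lemma isContSection_zero' (B : USCBanachBundle X Fib) :
    B.IsContSection (fun x => (0 : Fib x)) := by
  rw [IsContSection, @continuous_iff_continuousAt _ _ _ B.topTotal]
  intro x
  exact B.tendsto_zero (nhds x) (fun y => ⟨y, 0⟩) x tendsto_id
    (by simpa using (tendsto_const_nhds : Filter.Tendsto (fun _ : X => (0:ℝ)) _ _))

lemma memGammaC_zero' (B : USCBanachBundle X Fib) :
    B.MemGammaC (fun x => (0 : Fib x)) :=
  ⟨B.isContSection_zero', ∅, isCompact_empty, fun _ _ => rfl⟩

lemma memGammaC_smul' (B : USCBanachBundle X Fib) (c : ℂ) {f : ∀ x, Fib x}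
    (hf : B.MemGammaC f) : B.MemGammaC (fun x => c • f x) := by
  obtain ⟨hc, K, hK, h0⟩ := hf
  refine ⟨?_, K, hK, fun x hx => ?_⟩
  · exact @Continuous.comp _ _ _ _ B.topTotal B.topTotal _ _ (B.continuous_smul c) hc
  · show c • f x = 0
    rw [h0 x hx, smul_zero]

lemma grm_map_zero' {B : USCBanachBundle X Fib} {ν : (∀ x, Fib x) → ℂ}
    (hν : B.IsGRM ν) : ν (fun x => (0 : Fib x)) = 0 := by
  have h := hν.2.1 0 (fun x => (0 : Fib x)) B.memGammaC_zero'
  simpa using h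

lemma usc_norm' {B : USCBanachBundle X Fib} {f : ∀ x, Fib x}
    (hf : B.IsContSection f) : UpperSemicontinuous (fun x => ‖f x‖) := by
  rw [upperSemicontinuous_iff_isOpen_preimage]
  intro r
  have h : (fun x => ‖f x‖) ⁻¹' Iio r
      = (fun x => (⟨x, f x⟩ : (x : X) × Fib x)) ⁻¹' { b | ‖b.2‖ < r } := rfl
  rw [h]
  exact @IsOpen.preimage _ _ _ B.topTotal _ hf _ (B.isOpen_norm_lt r)

lemma exists_bound' {B : USCBanachBundle X Fib} {f : ∀ x, Fib x}
    (hf : B.MemGammaC f) : ∃ M : ℝ, 0 ≤ M ∧ ∀ x, ‖f x‖ ≤ M := by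
  obtain ⟨hc, K, hK, h0⟩ := hf
  have husc := usc_norm' hc
  have hcov : K ⊆ ⋃ n : ℕ, (fun x => ‖f x‖) ⁻¹' Iio (n : ℝ) := by
    intro x _
    obtain ⟨n, hn⟩ := exists_nat_gt ‖f x‖
    exact mem_iUnion.mpr ⟨n, hn⟩
  obtain ⟨t, ht⟩ := hK.elim_finite_subcover _
    (fun n : ℕ => husc.isOpen_preimage (n : ℝ)) hcov
  refine ⟨(t.sup id : ℕ), Nat.cast_nonneg _, fun x => ?_⟩
  by_cases hx : x ∈ K
  · obtain ⟨n, hn, hxn⟩ := mem_iUnion₂.mp (ht hx)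
    calc ‖f x‖ ≤ (n : ℝ) := le_of_lt hxn
      _ ≤ (t.sup id : ℕ) := Nat.cast_le.mpr (Finset.le_sup (f := id) hn)
  · rw [h0 x hx]
    simp

end Aux

section Main

variable {G : Type} [TopologicalSpace G] [SecondCountableTopology G]
  [LocallyCompactSpace G] [T2Space G] [MeasurableSpace G] [BorelSpace G]
  {Fib : G → Type}
  [∀ x, NormedAddCommGroup (Fib x)] [∀ x, NormedSpace ℂ (Fib x)]
  [∀ x, CompleteSpace (Fib x)]

lemma integrable_norm' {B : USCBanachBundle G Fib} {f : ∀ x, Fib x}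
    (hf : B.MemGammaC f) (μ : Measure G) (hμ : ∀ K : Set G, IsCompact K → μ K < ⊤) :
    Integrable (fun x => ‖f x‖) μ := by
  obtain ⟨M, hM0, hM⟩ := exists_bound' hf
  obtain ⟨hc, K, hK, h0⟩ := hf
  have hmeas : Measurable (fun x => ‖f x‖) := (usc_norm' hc).measurable
  have hind : (fun x => ‖f x‖) = K.indicator (fun x => ‖f x‖) := by
    funext x
    by_cases hx : x ∈ K
    · simp [hx]
    · simp [hx, h0 x hx]
  rw [hind, integrable_indicator_iff hK.isClosed.measurableSet]
  refine Measure.integrableOn_of_bounded (M := M) (hμ K hK).ne hmeas.aestronglyMeasurable ?_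
  exact ae_of_all _ fun x => by
    simpa [Real.norm_eq_abs, abs_of_nonneg (norm_nonneg (f x))] using hM x

lemma bddAbove_S' (B : USCBanachBundle G Fib) {ν : (∀ x, Fib x) → ℂ}
    (hν : B.IsGRM ν) (φ : G → ℝ) (hφc : Continuous φ) (hφs : HasCompactSupport φ) :
    BddAbove { r : ℝ | ∃ f, B.MemGammaC f ∧ (∀ x, ‖f x‖ ≤ φ x) ∧ r = ‖ν f‖ } := by
  by_contra hb
  rw [not_bddAbove_iff] at hb
  have hsel : ∀ n : ℕ, ∃ f, B.MemGammaC f ∧ (∀ x, ‖f x‖ ≤ φ x) ∧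
      ((n : ℝ) + 1) ^ 2 < ‖ν f‖ := by
    intro n
    obtain ⟨y, ⟨f, hf1, hf2, rfl⟩, hy⟩ := hb (((n : ℝ) + 1) ^ 2)
    exact ⟨f, hf1, hf2, hy⟩
  choose g hg hgle hgn using hsel
  obtain ⟨C, hC⟩ := hφc.bounded_above_of_compact_support hφs
  set Gs : ℕ → ∀ x, Fib x :=
    fun n x => ((((n : ℝ) + 1)⁻¹ : ℝ) : ℂ) • g n x with hGs
  have hnormc : ∀ n : ℕ, ‖((((n : ℝ) + 1)⁻¹ : ℝ) : ℂ)‖ = ((n : ℝ) + 1)⁻¹ := by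
    intro n
    rw [Complex.norm_real, Real.norm_eq_abs, abs_of_pos]
    positivity
  have hGmem : ∀ n, B.MemGammaC (Gs n) := fun n => B.memGammaC_smul' _ (hg n)
  have hGsupp : ∀ n, ∀ x ∉ tsupport φ, Gs n x = 0 := by
    intro n x hx
    have hφx : φ x = 0 := image_eq_zero_of_notMem_tsupport hx
    have : ‖g n x‖ ≤ 0 := hφx ▸ hgle n x
    have hzero : g n x = 0 := norm_le_zero_iff.mp this
    simp [hGs, hzero]
  have hunif : B.UnifTendsto Gs (fun x => (0 : Fib x)) := by
    intro ε hε
    obtain ⟨N, hN⟩ := exists_nat_gt (C / ε)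
    refine ⟨N, fun n hn x => ?_⟩
    have hφx : φ x ≤ C := by
      have := hC x
      rw [Real.norm_eq_abs, abs_le] at this
      exact this.2
    have hx1 : ‖Gs n x - (0 : Fib x)‖ = ((n : ℝ) + 1)⁻¹ * ‖g n x‖ := by
      rw [sub_zero]
      show ‖((((n : ℝ) + 1)⁻¹ : ℝ) : ℂ) • g n x‖ = _
      rw [norm_smul, hnormc]
    rw [hx1]
    have hgx : ‖g n x‖ ≤ C := le_trans (hgle n x) hφx
    have hNn : (N : ℝ) ≤ (n : ℝ) := Nat.cast_le.mpr hn
    have hlt : C / ε < (n : ℝ) + 1 := lt_of_lt_of_le hN (by linarith)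
    calc ((n : ℝ) + 1)⁻¹ * ‖g n x‖ ≤ ((n : ℝ) + 1)⁻¹ * C :=
          mul_le_mul_of_nonneg_left hgx (by positivity)
      _ < ε := by
          rw [inv_mul_lt_iff₀ (by positivity : (0:ℝ) < (n : ℝ) + 1)]
          exact (div_lt_iff₀ hε).mp hlt
  have htend := hν.2.2 Gs (fun x => (0 : Fib x)) (tsupport φ) hGmem
    B.memGammaC_zero' hφs hGsupp hunif
  rw [grm_map_zero' hν] at htend
  have hev : ∀ᶠ n in atTop, ‖ν (Gs n)‖ < 1 := by
    have h := htend.norm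
    rw [norm_zero] at h
    exact h.eventually_lt_const (by norm_num)
  obtain ⟨n, hn⟩ := hev.exists
  have hνGs : ν (Gs n) = ((((n : ℝ) + 1)⁻¹ : ℝ) : ℂ) * ν (g n) :=
    hν.2.1 _ (g n) (hg n)
  have hgt : (1 : ℝ) < ‖ν (Gs n)‖ := by
    rw [hνGs, norm_mul, hnormc]
    have h2 : (0:ℝ) < (n : ℝ) + 1 := by positivity
    calc (1:ℝ) ≤ (n : ℝ) + 1 := by
          have := Nat.cast_nonneg (α := ℝ) n
          linarith
      _ = ((n : ℝ) + 1)⁻¹ * ((n : ℝ) + 1) ^ 2 := by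
          field_simp
      _ < ((n : ℝ) + 1)⁻¹ * ‖ν (g n)‖ :=
          mul_lt_mul_of_pos_left (hgn n) (inv_pos.mpr h2)
  linarith

end Main

end USCBanachBundle

/-- Corollary 3.4 of the paper: (1) `|ν f| ≤ ∫ ‖f x‖ d|ν|(x)` for all
`f ∈ Γ_c(G;𝔅)`, and (2) the total variation `|ν|` is the smallest Radon measure `μ`
with `|ν f| ≤ ∫ ‖f x‖ dμ(x)` for all `f ∈ Γ_c(G;𝔅)`. -/
theorem USCBanachBundle.norm_grm_le_integral_totalVariation
    {G : Type} [TopologicalSpace G] [SecondCountableTopology G]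
    [LocallyCompactSpace G] [T2Space G]
    [MeasurableSpace G] [BorelSpace G]
    {Fib : G → Type}
    [∀ x, NormedAddCommGroup (Fib x)] [∀ x, NormedSpace ℂ (Fib x)]
    [∀ x, CompleteSpace (Fib x)]
    (B : USCBanachBundle G Fib)
    (ν : (∀ x, Fib x) → ℂ) (hν : B.IsGRM ν)
    (μν : Measure G) (hμν : B.IsTotalVariation ν μν) :
    (∀ f, B.MemGammaC f → ‖ν f‖ ≤ ∫ x, ‖f x‖ ∂μν) ∧
    (∀ μ : Measure G, (∀ K : Set G, IsCompact K → μ K < ⊤) →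
      (∀ f, B.MemGammaC f → ‖ν f‖ ≤ ∫ x, ‖f x‖ ∂μ) →
      ∀ φ : G → ℝ, Continuous φ → HasCompactSupport φ → (∀ x, 0 ≤ φ x) →
        ∫ x, φ x ∂μν ≤ ∫ x, φ x ∂μ) := by
  haveI : IsFiniteMeasureOnCompacts μν := ⟨fun K hK => hμν.1 K hK⟩
  have key : ∀ (f : ∀ x, Fib x), B.MemGammaC f →
      ∀ φ : G → ℝ, Continuous φ → HasCompactSupport φ → (∀ x, 0 ≤ φ x) →
      (∀ x, ‖f x‖ ≤ φ x) → ‖ν f‖ ≤ ∫ x, φ x ∂μν := by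
    intro f hf φ hφc hφs hφ0 hle
    rw [hμν.2 φ hφc hφs hφ0]
    exact le_csSup (B.bddAbove_S' hν φ hφc hφs) ⟨f, hf, hle, rfl⟩
  constructor
  · intro f hf
    by_cases hGne : Nonempty G
    swap
    · have hfe : f = fun x => (0 : Fib x) := funext fun x => (hGne ⟨x⟩).elim
      rw [hfe, grm_map_zero' hν, norm_zero]
      exact integral_nonneg fun x => norm_nonneg _
    haveI := hGne
    obtain ⟨hc, K, hK, h0⟩ := hf
    have hf' : B.MemGammaC f := ⟨hc, K, hK, h0⟩
    obtain ⟨M, hM0, hM⟩ := exists_bound' hf'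
    letI : MetricSpace G := TopologicalSpace.metrizableSpaceMetric G
    obtain ⟨ψ, hψ1, -, hψs, hψicc⟩ :=
      exists_continuous_one_zero_of_isCompact hK isClosed_empty (disjoint_empty _)
    set h : G → ℝ := fun x => ‖f x‖ with hh
    have husc : UpperSemicontinuous h := usc_norm' hc
    have h0le : ∀ x, 0 ≤ h x := fun x => norm_nonneg _
    set q : ℕ → G → ℝ := fun n x => ⨆ y, (h y - ((n : ℝ) + 1) * dist x y) with hq
    have hbdd : ∀ (n : ℕ) (x : G),
        BddAbove (range fun y => h y - ((n : ℝ) + 1) * dist x y) := by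
      intro n x
      refine ⟨M, ?_⟩
      rintro r ⟨y, rfl⟩
      show h y - ((n : ℝ) + 1) * dist x y ≤ M
      have hd := dist_nonneg (x := x) (y := y)
      have hy : h y ≤ M := hM y
      nlinarith [Nat.cast_nonneg (α := ℝ) n]
    have hqge : ∀ n x, h x ≤ q n x := by
      intro n x
      have := le_ciSup (hbdd n x) x
      simpa using this
    have hqM : ∀ n x, q n x ≤ M := by
      intro n x
      refine ciSup_le fun y => ?_
      have hd := dist_nonneg (x := x) (y := y)
      have hy : h y ≤ M := hM y
      nlinarith [Nat.cast_nonneg (α := ℝ) n]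
    have hq0 : ∀ n x, 0 ≤ q n x := fun n x => le_trans (h0le x) (hqge n x)
    have hqkey : ∀ n x x', q n x ≤ q n x' + ((n : ℝ) + 1) * dist x x' := by
      intro n x x'
      refine ciSup_le fun y => ?_
      have htri : dist x' y ≤ dist x' x + dist x y := dist_triangle _ _ _
      have h1 : h y - ((n : ℝ) + 1) * dist x y
          ≤ (h y - ((n : ℝ) + 1) * dist x' y) + ((n : ℝ) + 1) * dist x x' := by
        have hrw : dist x x' = dist x' x := dist_comm _ _
        nlinarith [Nat.cast_nonneg (α := ℝ) n]
      exact h1.trans (add_le_add_left (le_ciSup (hbdd n x') y) _)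
    have hqcont : ∀ n, Continuous (q n) := by
      intro n
      have hlip : LipschitzWith (⟨(n : ℝ) + 1, by positivity⟩ : NNReal) (q n) := by
        apply LipschitzWith.of_dist_le_mul
        intro x x'
        rw [Real.dist_eq]
        show |q n x - q n x'| ≤ ((n : ℝ) + 1) * dist x x'
        rw [abs_le]
        have h1 := hqkey n x x'
        have h2 := hqkey n x' x
        rw [dist_comm x' x] at h2
        constructor <;> linarith
      exact hlip.continuous
    have hconv : ∀ x, Tendsto (fun n => q n x) atTop (𝓝 (h x)) := by
      intro x
      rw [Metric.tendsto_atTop]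
      intro ε hε
      have husc_x := husc x (h x + ε / 2) (by linarith)
      rw [Metric.eventually_nhds_iff] at husc_x
      obtain ⟨δ, hδ, hδball⟩ := husc_x
      obtain ⟨N, hN⟩ := exists_nat_gt (M / δ)
      refine ⟨N, fun n hn => ?_⟩
      have hub : q n x ≤ h x + ε / 2 := by
        refine ciSup_le fun y => ?_
        by_cases hxy : dist y x < δ
        · have hy1 := hδball hxy
          nlinarith [mul_nonneg (by positivity : (0:ℝ) ≤ (n : ℝ) + 1)
            (dist_nonneg (x := x) (y := y))]
        · push_neg at hxy
          have hd : δ ≤ dist x y := by rwa [dist_comm]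
          have hNn : (N : ℝ) ≤ (n : ℝ) := Nat.cast_le.mpr hn
          have hMd : M < (n : ℝ) * δ := by
            have hlt : M / δ < (n : ℝ) := lt_of_lt_of_le hN hNn
            exact (div_lt_iff₀ hδ).mp hlt
          have hy : h y ≤ M := hM y
          nlinarith [mul_le_mul_of_nonneg_left hd
            (by positivity : (0:ℝ) ≤ (n : ℝ) + 1), h0le x]
      have hlb := hqge n x
      rw [Real.dist_eq, abs_of_nonneg (by linarith)]
      linarith
    have hψcont : Continuous ψ := ψ.continuous
    have hψ0 : ∀ x, 0 ≤ ψ x := fun x => (hψicc x).1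
    have hψle1 : ∀ x, ψ x ≤ 1 := fun x => (hψicc x).2
    have hhψ : ∀ x, h x * ψ x = h x := by
      intro x
      by_cases hx : x ∈ K
      · have hx1 : ψ x = 1 := hψ1 hx
        rw [hx1, mul_one]
      · have hx0 : h x = 0 := by
          show ‖f x‖ = 0
          rw [h0 x hx, norm_zero]
        rw [hx0, zero_mul]
    have hsuppMψ : HasCompactSupport (fun x => M * ψ x) :=
      (hψs.mul_left : HasCompactSupport ((fun _ : G => M) * ⇑ψ))
    have hdom : Tendsto (fun n => ∫ x, q n x * ψ x ∂μν) atTop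
        (𝓝 (∫ x, h x ∂μν)) := by
      refine tendsto_integral_of_dominated_convergence (fun x => M * ψ x)
        (fun n => ((hqcont n).mul hψcont).aestronglyMeasurable) ?_ ?_ ?_
      · exact (continuous_const.mul hψcont).integrable_of_hasCompactSupport hsuppMψ
      · intro n
        refine ae_of_all _ fun x => ?_
        rw [Real.norm_eq_abs, abs_of_nonneg (mul_nonneg (hq0 n x) (hψ0 x))]
        exact mul_le_mul_of_nonneg_right (hqM n x) (hψ0 x)
      · refine ae_of_all _ fun x => ?_
        have := (hconv x).mul_const (ψ x)
        rwa [hhψ x] at this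
    have hstep : ∀ n : ℕ, ‖ν f‖ ≤ ∫ x, q n x * ψ x ∂μν := by
      intro n
      have hsupp : HasCompactSupport (fun x => q n x * ψ x) :=
        (hψs.mul_left : HasCompactSupport (q n * ⇑ψ))
      refine key f hf' _ ((hqcont n).mul hψcont) hsupp
        (fun x => mul_nonneg (hq0 n x) (hψ0 x)) ?_
      intro x
      by_cases hx : x ∈ K
      · have hx1 : ψ x = 1 := hψ1 hx
        have h1 : ‖f x‖ ≤ q n x := hqge n x
        rw [hx1, mul_one]
        exact h1
      · rw [h0 x hx, norm_zero]
        exact mul_nonneg (hq0 n x) (hψ0 x)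
    exact ge_of_tendsto' hdom hstep
  · intro μ hμK hμint φ hφc hφs hφ0
    haveI : IsFiniteMeasureOnCompacts μ := ⟨fun K hK => hμK K hK⟩
    rw [hμν.2 φ hφc hφs hφ0]
    refine Real.sSup_le ?_ (integral_nonneg hφ0)
    rintro r ⟨g, hg, hgle, rfl⟩
    calc ‖ν g‖ ≤ ∫ x, ‖g x‖ ∂μ := hμint g hg
      _ ≤ ∫ x, φ x ∂μ := integral_mono (integrable_norm' hg μ hμK)
          (hφc.integrable_of_hasCompactSupport hφs) hgle
end

section
/- Let p : 𝔅 → G be an upper semicontinuous Banach bundle over a second countable locally compact Hausdorff space G, and suppose that for each x ∈ G there is given ε_x ∈ B(x)* with ‖ε_x‖ ≤ 1 such that x ↦ ε_x(f(x)) is Borel for every f ∈ Γ_c(G;𝔅). Let Z be a second countable locally compact Hausdorff space and m : Z → G a continuous map. If F : Z → 𝔅 is a continuous map with p(F(z)) = m(z) for all z and with {z ∈ Z : F(z) ≠ 0_{m(z)}} contained in a compact set (i.e., F is a compactly supported continuous section of the pull-back bundle m*𝔅), then z ↦ ε_{m(z)}(F(z)) is a Borel function on Z. (The paper applies this with m the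 multiplication map G^{(2)} → G of a groupoid and with the map κ(x,y,z) = y⁻¹x on G^{(3)}; the proof uses only the continuity of m.) -/
open MeasureTheory Filter Topology Set

namespace USCBanachBundle

variable {X : Type} [TopologicalSpace X] {Fib : X → Type}
  [∀ x, NormedAddCommGroup (Fib x)] [∀ x, NormedSpace ℂ (Fib x)]
  [∀ x, CompleteSpace (Fib x)]

lemma tendsto_add_section' (B : USCBanachBundle X Fib) {ι : Type} {l : Filter ι}
    {n : ι → X} {a b : ∀ i, Fib (n i)} {x₀ : X} {a₀ b₀ : Fib x₀}
    (ha : Tendsto (fun i => (⟨n i, a i⟩ : (x : X) × Fib x)) l (@nhds _ B.topTotal ⟨x₀, a₀⟩))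
    (hb : Tendsto (fun i => (⟨n i, b i⟩ : (x : X) × Fib x)) l (@nhds _ B.topTotal ⟨x₀, b₀⟩)) :
    Tendsto (fun i => (⟨n i, a i + b i⟩ : (x : X) × Fib x)) l
      (@nhds _ B.topTotal ⟨x₀, a₀ + b₀⟩) := by
  letI := B.topTotal
  have hq : Tendsto (fun i => (⟨(⟨n i, a i⟩, ⟨n i, b i⟩), rfl⟩ :
      {q : ((x : X) × Fib x) × ((x : X) × Fib x) // q.1.1 = q.2.1})) l
      (𝓝 ⟨(⟨x₀, a₀⟩, ⟨x₀, b₀⟩), rfl⟩) := by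
    rw [tendsto_subtype_rng]
    exact ha.prodMk_nhds hb
  exact (B.continuous_add.tendsto _).comp hq

lemma isContSection_smul (B : USCBanachBundle X Fib) {ψ : X → ℂ} (hψ : Continuous ψ)
    {f : ∀ x, Fib x} (hf : B.IsContSection f) :
    B.IsContSection (fun x => ψ x • f x) := by
  letI := B.topTotal
  rw [IsContSection, continuous_iff_continuousAt]
  intro x₀
  set c := ψ x₀ with hc
  have ha : Tendsto (fun x => (⟨x, c • f x⟩ : (x : X) × Fib x)) (𝓝 x₀)
      (𝓝 ⟨x₀, c • f x₀⟩) := ((B.continuous_smul c).comp hf).tendsto x₀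
  have hb : Tendsto (fun x => (⟨x, (ψ x - c) • f x⟩ : (x : X) × Fib x)) (𝓝 x₀)
      (𝓝 (⟨x₀, 0⟩ : (x : X) × Fib x)) := by
    apply B.tendsto_zero (𝓝 x₀) _ x₀ tendsto_id
    have hbd : ∀ᶠ x in 𝓝 x₀, ‖f x‖ < ‖f x₀‖ + 1 := by
      have : IsOpen {x : X | ‖f x‖ < ‖f x₀‖ + 1} := by
        have := (B.isOpen_norm_lt (‖f x₀‖ + 1)).preimage hf
        exact this
      exact this.eventually_mem (by simp only [mem_setOf_eq]; linarith)
    have hψ0 : Tendsto (fun x => ‖ψ x - c‖) (𝓝 x₀) (𝓝 0) := by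
      have : Tendsto (fun x => ψ x - c) (𝓝 x₀) (𝓝 (c - c)) :=
        (hψ.tendsto x₀).sub tendsto_const_nhds
      rw [sub_self] at this
      simpa using this.norm
    have hbound : Tendsto (fun x => ‖ψ x - c‖ * (‖f x₀‖ + 1)) (𝓝 x₀) (𝓝 0) := by
      simpa using hψ0.mul_const (‖f x₀‖ + 1)
    apply squeeze_zero' (Eventually.of_forall fun x => norm_nonneg _) _ hbound
    filter_upwards [hbd] with x hx
    rw [norm_smul]
    exact mul_le_mul_of_nonneg_left hx.le (norm_nonneg _)
  have key := B.tendsto_add_section' ha hb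
  have heq : (fun x => (⟨x, c • f x + (ψ x - c) • f x⟩ : (x : X) × Fib x)) =
      fun x => (⟨x, ψ x • f x⟩ : (x : X) × Fib x) := by
    funext x
    congr 1
    rw [sub_smul]
    abel
  rw [heq] at key
  have : c • f x₀ + (0 : Fib x₀) = ψ x₀ • f x₀ := by rw [add_zero, hc]
  rw [this] at key
  exact key

lemma continuous_sub_section (B : USCBanachBundle X Fib) {Z : Type} [TopologicalSpace Z]
    {m : Z → X} (hm : Continuous m) {F : ∀ z, Fib (m z)}
    (hF : @Continuous Z ((x : X) × Fib x) inferInstance B.topTotal fun z => ⟨m z, F z⟩)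
    {g : ∀ x, Fib x} (hg : B.IsContSection g) :
    @Continuous Z ((x : X) × Fib x) inferInstance B.topTotal
      fun z => (⟨m z, F z - g (m z)⟩ : (x : X) × Fib x) := by
  letI := B.topTotal
  rw [continuous_iff_continuousAt]
  intro z₀
  have hb : Tendsto (fun z => (⟨m z, -g (m z)⟩ : (x : X) × Fib x)) (𝓝 z₀)
      (𝓝 ⟨m z₀, -g (m z₀)⟩) := by
    have h1 : Continuous fun z => (⟨m z, (-1 : ℂ) • g (m z)⟩ : (x : X) × Fib x) :=
      (B.continuous_smul (-1)).comp (hg.comp hm)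
    have heq : (fun z => (⟨m z, (-1 : ℂ) • g (m z)⟩ : (x : X) × Fib x)) =
        fun z => (⟨m z, -g (m z)⟩ : (x : X) × Fib x) := by
      funext z; congr 1; rw [neg_one_smul]
    rw [heq] at h1
    exact h1.tendsto z₀
  have key := B.tendsto_add_section' (hF.tendsto z₀) hb
  have heq : (fun z => (⟨m z, F z + -g (m z)⟩ : (x : X) × Fib x)) =
      fun z => (⟨m z, F z - g (m z)⟩ : (x : X) × Fib x) := by
    funext z; congr 1; rw [sub_eq_add_neg]
  rw [heq] at key
  have : F z₀ + -g (m z₀) = F z₀ - g (m z₀) := (sub_eq_add_neg _ _).symm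
  rw [this] at key
  exact key

end USCBanachBundle

/-- Lemmas 3.11/3.12 of the paper: if `x ↦ ε_x (f x)` is Borel for
every `f ∈ Γ_c(G;𝔅)` (with `‖ε_x‖ ≤ 1`), `m : Z → G` is continuous, and `F` is a
compactly supported continuous section of the pull-back bundle `m*𝔅`, then
`z ↦ ε_{m z} (F z)` is Borel on `Z`. -/
theorem USCBanachBundle.pullback_section_borel
    {G : Type} [TopologicalSpace G] [SecondCountableTopology G]
    [LocallyCompactSpace G] [T2Space G]
    [MeasurableSpace G] [BorelSpace G]
    {Fib : G → Type}
    [∀ x, NormedAddCommGroup (Fib x)] [∀ x, NormedSpace ℂ (Fib x)]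
    [∀ x, CompleteSpace (Fib x)]
    (B : USCBanachBundle G Fib)
    (ε : (x : G) → (Fib x →L[ℂ] ℂ)) (hε : ∀ x, ‖ε x‖ ≤ 1)
    (hmeas : ∀ f, B.MemGammaC f → Measurable fun x => ε x (f x))
    {Z : Type} [TopologicalSpace Z] [SecondCountableTopology Z]
    [LocallyCompactSpace Z] [T2Space Z]
    [MeasurableSpace Z] [BorelSpace Z]
    (m : Z → G) (hm : Continuous m)
    (F : ∀ z, Fib (m z))
    (hF_cont : @Continuous Z ((x : G) × Fib x) inferInstance B.topTotal
      fun z => ⟨m z, F z⟩)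
    (hF_supp : ∃ K : Set Z, IsCompact K ∧ ∀ z ∉ K, F z = 0) :
    Measurable fun z => ε (m z) (F z) := by
  letI := B.topTotal
  obtain ⟨K, hK, hFK⟩ := hF_supp
  -- a compactly supported bump on G which is 1 on m '' K
  obtain ⟨ψ, hψ1, -, hψc, hψ01⟩ :=
    exists_continuous_one_zero_of_isCompact (hK.image hm) isClosed_empty
      (disjoint_empty _)
  -- for each z₀ there is a compactly supported section agreeing with F at z₀
  have sect : ∀ z₀ : Z, ∃ g : ∀ x, Fib x, B.MemGammaC g ∧ g (m z₀) = F z₀ := by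
    intro z₀
    obtain ⟨f, hf, hfz⟩ := B.enough_sections (m z₀) (F z₀)
    refine ⟨fun x => ((ψ x : ℝ) : ℂ) • f x, ⟨?_, tsupport ψ, hψc, ?_⟩, ?_⟩
    · exact B.isContSection_smul (Complex.continuous_ofReal.comp ψ.continuous) hf
    · intro x hx
      show ((ψ x : ℝ) : ℂ) • f x = 0
      rw [image_eq_zero_of_notMem_tsupport hx]
      simp
    · show ((ψ (m z₀) : ℝ) : ℂ) • f (m z₀) = F z₀
      by_cases hz : z₀ ∈ K
      · rw [hψ1 (mem_image_of_mem m hz), hfz]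
        simp
      · rw [hfz, hFK z₀ hz]
        simp
  choose gs hgsC hgsF using sect
  -- the main approximation step
  have approx : ∀ δ : ℝ, 0 < δ → ∃ g : Z → ℂ, Measurable g ∧
      ∀ z, ‖ε (m z) (F z) - g z‖ ≤ δ := by
    intro δ hδ
    set U : Z → Set Z := fun z₀ => {z | ‖F z - gs z₀ (m z)‖ < δ} with hU
    have hUopen : ∀ z₀, IsOpen (U z₀) := by
      intro z₀
      have := (B.isOpen_norm_lt δ).preimage
        (B.continuous_sub_section hm hF_cont (hgsC z₀).1)
      exact this
    have hUmem : ∀ z₀, z₀ ∈ U z₀ := by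
      intro z₀
      simp only [hU, mem_setOf_eq, hgsF z₀, sub_self, norm_zero]
      exact hδ
    obtain ⟨t, ht⟩ := hK.elim_finite_subcover U hUopen
      (fun z hz => mem_iUnion.mpr ⟨z, hUmem z⟩)
    have hcov : K ⊆ ⋃ i : {i // i ∈ t}, U i.1 := by
      intro z hz
      obtain ⟨i, hi, hzi⟩ := mem_iUnion₂.mp (ht hz)
      exact mem_iUnion.mpr ⟨⟨i, hi⟩, hzi⟩
    obtain ⟨φ, hφsub, -⟩ :=
      PartitionOfUnity.exists_isSubordinate_of_locallyFinite_t2space hK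
        (fun i : {i // i ∈ t} => U i.1) (fun i => hUopen i.1)
        (locallyFinite_of_finite _) hcov
    refine ⟨fun z => ∑ i : {i // i ∈ t}, ((φ i z : ℝ) : ℂ) * ε (m z) (gs i.1 (m z)),
      ?_, ?_⟩
    · apply Finset.measurable_sum
      intro i _
      exact (Complex.measurable_ofReal.comp (φ i).continuous.measurable).mul
        ((hmeas _ (hgsC i.1)).comp hm.measurable)
    · intro z
      set c := ε (m z) (F z) with hcdef
      have hsumφ : ∑ᶠ i, φ i z = ∑ i : {i // i ∈ t}, φ i z :=
        finsum_eq_sum_of_fintype _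
      have hterm : ∀ i : {i // i ∈ t},
          ‖((φ i z : ℝ) : ℂ) * (c - ε (m z) (gs i.1 (m z)))‖ ≤ φ i z * δ := by
        intro i
        rw [norm_mul, Complex.norm_real, Real.norm_eq_abs,
          abs_of_nonneg (φ.nonneg i z)]
        by_cases hφ0 : φ i z = 0
        · simp [hφ0]
        · apply mul_le_mul_of_nonneg_left _ (φ.nonneg i z)
          have hzU : z ∈ U i.1 := hφsub i (subset_closure (by simpa using hφ0))
          have h1 : c - ε (m z) (gs i.1 (m z)) = ε (m z) (F z - gs i.1 (m z)) :=
            (map_sub (ε (m z)) _ _).symm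
          rw [h1]
          calc ‖ε (m z) (F z - gs i.1 (m z))‖
              ≤ ‖ε (m z)‖ * ‖F z - gs i.1 (m z)‖ := (ε (m z)).le_opNorm _
            _ ≤ 1 * ‖F z - gs i.1 (m z)‖ :=
                mul_le_mul_of_nonneg_right (hε (m z)) (norm_nonneg _)
            _ = ‖F z - gs i.1 (m z)‖ := one_mul _
            _ ≤ δ := hzU.le
      have hφc : (∑ i : {i // i ∈ t}, ((φ i z : ℝ) : ℂ)) * c = c := by
        by_cases hz : z ∈ K
        · have h1 : ∑ i : {i // i ∈ t}, φ i z = 1 := by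
            rw [← hsumφ]; exact φ.sum_eq_one hz
          have h2 : (∑ i : {i // i ∈ t}, ((φ i z : ℝ) : ℂ)) = 1 := by
            rw [← Complex.ofReal_sum, h1, Complex.ofReal_one]
          rw [h2, one_mul]
        · have : c = 0 := by rw [hcdef, hFK z hz, map_zero]
          rw [this, mul_zero]
      have hkey : c - (∑ i : {i // i ∈ t}, ((φ i z : ℝ) : ℂ) * ε (m z) (gs i.1 (m z)))
          = ∑ i : {i // i ∈ t}, ((φ i z : ℝ) : ℂ) * (c - ε (m z) (gs i.1 (m z))) := by
        have expand : ∑ i : {i // i ∈ t}, ((φ i z : ℝ) : ℂ) * (c - ε (m z) (gs i.1 (m z)))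
            = (∑ i : {i // i ∈ t}, ((φ i z : ℝ) : ℂ)) * c
              - ∑ i : {i // i ∈ t}, ((φ i z : ℝ) : ℂ) * ε (m z) (gs i.1 (m z)) := by
          simp only [mul_sub]
          rw [Finset.sum_sub_distrib, Finset.sum_mul]
        rw [expand, hφc]
      rw [hkey]
      calc ‖∑ i : {i // i ∈ t}, ((φ i z : ℝ) : ℂ) * (c - ε (m z) (gs i.1 (m z)))‖
          ≤ ∑ i : {i // i ∈ t}, ‖((φ i z : ℝ) : ℂ) * (c - ε (m z) (gs i.1 (m z)))‖ :=
            norm_sum_le _ _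
        _ ≤ ∑ i : {i // i ∈ t}, φ i z * δ := Finset.sum_le_sum fun i _ => hterm i
        _ = (∑ i : {i // i ∈ t}, φ i z) * δ := (Finset.sum_mul _ _ _).symm
        _ ≤ 1 * δ := by
            apply mul_le_mul_of_nonneg_right _ hδ.le
            rw [← hsumφ]
            exact φ.sum_le_one z
        _ = δ := one_mul δ
  -- take uniform limits
  choose g hgm hgb using fun n : ℕ => approx ((n : ℝ) + 1)⁻¹ (by positivity)
  apply measurable_of_tendsto_metrizable hgm
  rw [tendsto_pi_nhds]
  intro z
  rw [tendsto_iff_dist_tendsto_zero]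
  have hb : Tendsto (fun n : ℕ => ((n : ℝ) + 1)⁻¹) atTop (𝓝 0) :=
    tendsto_inv_atTop_zero.comp
      (tendsto_atTop_add_const_right _ 1 tendsto_natCast_atTop_atTop)
  apply squeeze_zero (fun n => dist_nonneg) _ hb
  intro n
  rw [dist_eq_norm, norm_sub_rev]
  exact hgb n z
end
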